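/- arXiv:2312.04026 — 4 statements merged into one kernel-verified Lean document; each statement's English description precedes it below -/
import Mathlib

section
/- Let n be an even positive integer, and for each i ∈ {1,…,n} let Y_i : {0,1} × [0,1] → ℝ be a fixed potential-outcome function that is L-Lipschitz in its second argument, i.e. |Y_i(z, ρ) − Y_i(z, ρ′)| ≤ L·|ρ − ρ′| for all z ∈ {0,1} and ρ, ρ′ ∈ [0,1]. Fix ρ ∈ [0,1] and interference levels ρ_1,…,ρ_n ∈ [0,1]. Let Z = (Z_1,…,Z_n) be uniformly distributed over all vectors in {0,1}^n with exactly n/2 coordinates equal to 1, and define τ̂ = (2/n)·Σ_i Y_i(Z_i, ρ_i)·Z_i − (2/n)·Σ_i Y_i(Z_i, ρ_i)·(1 − Z_i) and τ̄(ρ) = (1/n)·Σ_i (Y_i(1, ρ) − Y_i(0, ρ)). Then |𝔼[τ̂] − τ̄(ρ)| ≤ (2L/n)·Σ_i |ρ_i − ρ|. -/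
open Finset

/-- The completely randomized design: the set of binary assignment vectors on `n` units
with exactly `n/2` treated. -/
def crdSet (n : ℕ) : Finset (Fin n → Bool) :=
  Finset.univ.filter fun z => (Finset.univ.filter fun i => z i = true).card = n / 2

/-- Expectation of `f` under the uniform distribution on `crdSet n`. -/
noncomputable def crdExp (n : ℕ) (f : (Fin n → Bool) → ℝ) : ℝ :=
  (∑ z ∈ crdSet n, f z) / (crdSet n).card

/-- Real-valued treatment indicator. -/
def ind (b : Bool) : ℝ := if b then 1 else 0

lemma compl_mem {n : ℕ} (hev : Even n) {z : Fin n → Bool} (hz : z ∈ crdSet n) :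
    (fun j => !(z j)) ∈ crdSet n := by
  obtain ⟨m, hm⟩ := hev
  simp only [crdSet, mem_filter, mem_univ, true_and] at hz ⊢
  simp only [Bool.not_eq_true']
  have h : (Finset.univ.filter fun i => z i = false)
      = Finset.univ \ (Finset.univ.filter fun i => z i = true) := by
    ext i; simp
  rw [h, Finset.card_sdiff_of_subset (Finset.filter_subset _ _), Finset.card_univ, Fintype.card_fin, hz]
  omega

lemma crd_nonempty {n : ℕ} (hn : 0 < n) (hev : Even n) : (crdSet n).Nonempty := by
  obtain ⟨m, hm⟩ := hev
  have hmn : m < n := by omega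
  refine ⟨fun i => decide ((i : ℕ) < m), ?_⟩
  simp only [crdSet, mem_filter, mem_univ, true_and]
  have h : (Finset.univ.filter fun i : Fin n => decide ((i : ℕ) < m) = true)
      = Finset.Iio (⟨m, hmn⟩ : Fin n) := by
    ext i; simp [Fin.lt_def]
  rw [h, Fin.card_Iio]
  show m = n / 2
  omega

lemma sum_ind {n : ℕ} (hev : Even n) (i : Fin n) :
    ∑ z ∈ crdSet n, ind (z i) = ((crdSet n).card : ℝ) / 2 := by
  have h1 : ∑ z ∈ crdSet n, ind (z i) = ∑ z ∈ crdSet n, ind (!(z i)) := by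
    refine Finset.sum_nbij' (fun z => fun j => !(z j)) (fun z => fun j => !(z j)) ?_ ?_ ?_ ?_ ?_
    · intro z hz; exact compl_mem hev hz
    · intro z hz; exact compl_mem hev hz
    · intro z _; funext j; simp
    · intro z _; funext j; simp
    · intro z _; simp
  have h2 : ∀ b, ind (!b) = 1 - ind b := by intro b; cases b <;> simp [ind]
  have h3 : ∑ z ∈ crdSet n, ind (z i)
      = ((crdSet n).card : ℝ) - ∑ z ∈ crdSet n, ind (z i) := by
    conv_lhs => rw [h1]
    simp_rw [h2, Finset.sum_sub_distrib, Finset.sum_const, nsmul_eq_mul, mul_one]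
  linarith

/-- With `Yᵢ` `L`-Lipschitz in the interference argument on `[0,1]`, target level
`ρ₀ ∈ [0,1]`, interference levels `ρᵢ ∈ [0,1]`, a completely randomized design `Z` on `n` units
(`n` even, positive), the difference-in-means estimator `τ̂`, and
`τ̄(ρ₀) = (1/n)·Σᵢ (Yᵢ(1,ρ₀) - Yᵢ(0,ρ₀))`, one has
`|E[τ̂] - τ̄(ρ₀)| ≤ (2L/n)·Σᵢ |ρᵢ - ρ₀|`. -/
theorem stmt_7 (n : ℕ) (hn : 0 < n) (hev : Even n)
    (Y : Fin n → Bool → ℝ → ℝ) (L : ℝ)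
    (hLip : ∀ i (b : Bool), ∀ ρ₁ ∈ Set.Icc (0 : ℝ) 1, ∀ ρ₂ ∈ Set.Icc (0 : ℝ) 1,
      |Y i b ρ₁ - Y i b ρ₂| ≤ L * |ρ₁ - ρ₂|)
    (ρ₀ : ℝ) (hρ₀ : ρ₀ ∈ Set.Icc (0 : ℝ) 1)
    (ρ : Fin n → ℝ) (hρ : ∀ i, ρ i ∈ Set.Icc (0 : ℝ) 1)
    (τhat : (Fin n → Bool) → ℝ)
    (hτ : ∀ z, τhat z = (2 / n) * (∑ i, Y i (z i) (ρ i) * ind (z i))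
                      - (2 / n) * (∑ i, Y i (z i) (ρ i) * (1 - ind (z i)))) :
    |crdExp n τhat - (1 / n) * ∑ i, (Y i true ρ₀ - Y i false ρ₀)|
      ≤ (2 * L / n) * ∑ i, |ρ i - ρ₀| := by
  have hN : 0 < ((crdSet n).card : ℝ) := by
    exact_mod_cast (crd_nonempty hn hev).card_pos
  have hn' : (0:ℝ) < n := by exact_mod_cast hn
  have key : ∀ z ∈ crdSet n, τhat z = (2/(n:ℝ)) *
      ∑ i, ((Y i true (ρ i) + Y i false (ρ i)) * ind (z i) - Y i false (ρ i)) := by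
    intro z _
    rw [hτ, ← mul_sub, ← Finset.sum_sub_distrib]
    congr 1
    refine Finset.sum_congr rfl fun i _ => ?_
    cases h : z i <;> simp [ind]
  have hsum : ∑ z ∈ crdSet n, τhat z
      = ((crdSet n).card : ℝ)/n * ∑ i, (Y i true (ρ i) - Y i false (ρ i)) := by
    rw [Finset.sum_congr rfl key, ← Finset.mul_sum, Finset.sum_comm]
    have h : ∀ i : Fin n, ∑ z ∈ crdSet n,
        ((Y i true (ρ i) + Y i false (ρ i)) * ind (z i) - Y i false (ρ i))
        = ((crdSet n).card : ℝ)/2 * (Y i true (ρ i) - Y i false (ρ i)) := by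
      intro i
      rw [Finset.sum_sub_distrib, ← Finset.mul_sum, sum_ind hev, Finset.sum_const,
        nsmul_eq_mul]
      ring
    rw [Finset.sum_congr rfl fun i _ => h i, ← Finset.mul_sum]
    ring
  have hexp : crdExp n τhat = (1/(n:ℝ)) * ∑ i, (Y i true (ρ i) - Y i false (ρ i)) := by
    rw [crdExp, hsum]
    field_simp
  rw [hexp, ← mul_sub, ← Finset.sum_sub_distrib]
  have hbd : ∀ i : Fin n,
      |(Y i true (ρ i) - Y i false (ρ i)) - (Y i true ρ₀ - Y i false ρ₀)|
        ≤ 2 * L * |ρ i - ρ₀| := by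
    intro i
    have h1 := hLip i true (ρ i) (hρ i) ρ₀ hρ₀
    have h2 := hLip i false (ρ i) (hρ i) ρ₀ hρ₀
    calc |(Y i true (ρ i) - Y i false (ρ i)) - (Y i true ρ₀ - Y i false ρ₀)|
        = |(Y i true (ρ i) - Y i true ρ₀) - (Y i false (ρ i) - Y i false ρ₀)| := by ring_nf
      _ ≤ |Y i true (ρ i) - Y i true ρ₀| + |Y i false (ρ i) - Y i false ρ₀| := abs_sub _ _
      _ ≤ L * |ρ i - ρ₀| + L * |ρ i - ρ₀| := add_le_add h1 h2
      _ = 2 * L * |ρ i - ρ₀| := by ring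
  calc |(1/(n:ℝ)) * ∑ i, ((Y i true (ρ i) - Y i false (ρ i)) - (Y i true ρ₀ - Y i false ρ₀))|
      = (1/(n:ℝ)) * |∑ i, ((Y i true (ρ i) - Y i false (ρ i)) - (Y i true ρ₀ - Y i false ρ₀))| := by
        rw [abs_mul, abs_of_nonneg (by positivity)]
    _ ≤ (1/(n:ℝ)) * ∑ i, |(Y i true (ρ i) - Y i false (ρ i)) - (Y i true ρ₀ - Y i false ρ₀)| := by
        gcongr
        exact Finset.abs_sum_le_sum_abs _ _
    _ ≤ (1/(n:ℝ)) * ∑ i, 2 * L * |ρ i - ρ₀| := by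
        have h := Finset.sum_le_sum fun i (_ : i ∈ Finset.univ) => hbd i
        have h1n : (0:ℝ) ≤ 1/(n:ℝ) := by positivity
        exact mul_le_mul_of_nonneg_left h h1n
    _ = (2 * L / n) * ∑ i, |ρ i - ρ₀| := by
        rw [Finset.mul_sum, Finset.mul_sum]
        exact Finset.sum_congr rfl fun i _ => by ring
end

section
/- Let n ≥ 2 be an even integer, and for each i ∈ {1,…,n} let Y_i : {0,1} × [0,1] → ℝ be a fixed potential-outcome function and ρ_i ∈ [0,1] a fixed interference level. Let Z = (Z_1,…,Z_n) be uniformly distributed over all vectors in {0,1}^n with exactly n/2 coordinates equal to 1, and define τ̂ = (2/n)·Σ_i Y_i(Z_i, ρ_i)·Z_i − (2/n)·Σ_i Y_i(Z_i, ρ_i)·(1 − Z_i). Then Var[τ̂] = (1/n)·S[c], where c_i = Y_i(1, ρ_i) + Y_i(0, ρ_i) and S[c] = (n−1)^{−1}·Σ_i (c_i − c̄)² with c̄ = n^{−1}·Σ_i c_i. -/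
open Finset

lemma sum_crd (n : ℕ) (f : (Fin n → Bool) → ℝ) :
    ∑ z ∈ crdSet n, f z
      = ∑ A ∈ (Finset.univ : Finset (Fin n)).powersetCard (n/2),
          f (fun i => decide (i ∈ A)) := by
  refine Finset.sum_nbij' (fun z => Finset.univ.filter fun i => z i = true)
    (fun A => fun i => decide (i ∈ A)) ?_ ?_ ?_ ?_ ?_
  · intro z hz
    simp only [crdSet, mem_filter, mem_univ, true_and] at hz
    simp [Finset.mem_powersetCard_univ, hz]
  · intro A hA
    simp only [Finset.mem_powersetCard_univ] at hA
    simp only [crdSet, mem_filter, mem_univ, true_and]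
    rw [← hA]
    congr 1
    ext i
    simp
  · intro z hz
    funext i
    simp
  · intro A hA
    ext i
    simp
  · intro z hz
    congr 1
    funext i
    simp

lemma card_pcard_mem {α : Type*} [DecidableEq α] (s : Finset α) (k : ℕ) (i : α) (hi : i ∈ s) :
    ((s.powersetCard (k+1)).filter fun A => i ∈ A).card = ((s.erase i).powersetCard k).card := by
  refine Finset.card_nbij' (fun A => A.erase i) (fun B => insert i B) ?_ ?_ ?_ ?_
  · intro A hA
    simp only [Finset.mem_coe, mem_filter, Finset.mem_powersetCard] at hA ⊢
    obtain ⟨⟨hsub, hcard⟩, hmem⟩ := hA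
    refine ⟨fun x hx => ?_, ?_⟩
    · rcases Finset.mem_erase.1 hx with ⟨hxi, hxA⟩
      exact Finset.mem_erase.2 ⟨hxi, hsub hxA⟩
    · rw [Finset.card_erase_of_mem hmem, hcard]; rfl
  · intro B hB
    simp only [Finset.mem_coe, Finset.mem_powersetCard] at hB
    obtain ⟨hsub, hcard⟩ := hB
    have hiB : i ∉ B := fun h => (Finset.mem_erase.1 (hsub h)).1 rfl
    simp only [Finset.mem_coe, mem_filter, Finset.mem_powersetCard]
    refine ⟨⟨?_, ?_⟩, Finset.mem_insert_self _ _⟩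
    · intro x hx
      rcases Finset.mem_insert.1 hx with h | h
      · exact h ▸ hi
      · exact (Finset.mem_erase.1 (hsub h)).2
    · rw [Finset.card_insert_of_notMem hiB, hcard]
  · intro A hA
    simp only [Finset.mem_coe, mem_filter] at hA
    exact Finset.insert_erase hA.2
  · intro B hB
    simp only [Finset.mem_coe, Finset.mem_powersetCard] at hB
    have hiB : i ∉ B := fun h => (Finset.mem_erase.1 (hB.1 h)).1 rfl
    exact Finset.erase_insert hiB

lemma card_pcard_mem_pair {α : Type*} [DecidableEq α] (s : Finset α) (k : ℕ) (i j : α)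
    (hi : i ∈ s) (hj : j ∈ s) (hij : i ≠ j) :
    ((s.powersetCard (k+2)).filter fun A => i ∈ A ∧ j ∈ A).card
      = (((s.erase i).erase j).powersetCard k).card := by
  refine Finset.card_nbij' (fun A => (A.erase i).erase j) (fun B => insert i (insert j B)) ?_ ?_ ?_ ?_
  · intro A hA
    simp only [Finset.mem_coe, mem_filter, Finset.mem_powersetCard] at hA ⊢
    obtain ⟨⟨hsub, hcard⟩, hmi, hmj⟩ := hA
    refine ⟨fun x hx => ?_, ?_⟩
    · rcases Finset.mem_erase.1 hx with ⟨hxj, hx'⟩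
      rcases Finset.mem_erase.1 hx' with ⟨hxi, hxA⟩
      exact Finset.mem_erase.2 ⟨hxj, Finset.mem_erase.2 ⟨hxi, hsub hxA⟩⟩
    · rw [Finset.card_erase_of_mem (Finset.mem_erase.2 ⟨hij.symm, hmj⟩),
        Finset.card_erase_of_mem hmi, hcard]
      omega
  · intro B hB
    simp only [Finset.mem_coe, Finset.mem_powersetCard] at hB
    obtain ⟨hsub, hcard⟩ := hB
    have hjB : j ∉ B := fun h => (Finset.mem_erase.1 (hsub h)).1 rfl
    have hiB : i ∉ B := fun h => (Finset.mem_erase.1 (Finset.mem_erase.1 (hsub h)).2).1 rfl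
    have hiJB : i ∉ insert j B := by
      simp only [Finset.mem_insert]
      rintro (h | h)
      · exact hij h
      · exact hiB h
    simp only [Finset.mem_coe, mem_filter, Finset.mem_powersetCard]
    refine ⟨⟨?_, ?_⟩, Finset.mem_insert_self _ _,
      Finset.mem_insert_of_mem (Finset.mem_insert_self _ _)⟩
    · intro x hx
      rcases Finset.mem_insert.1 hx with h | h
      · exact h ▸ hi
      rcases Finset.mem_insert.1 h with h' | h'
      · exact h' ▸ hj
      · exact (Finset.mem_erase.1 (Finset.mem_erase.1 (hsub h')).2).2
    · rw [Finset.card_insert_of_notMem hiJB, Finset.card_insert_of_notMem hjB, hcard]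
  · intro A hA
    simp only [Finset.mem_coe, mem_filter] at hA
    obtain ⟨_, hmi, hmj⟩ := hA
    show insert i (insert j ((A.erase i).erase j)) = A
    rw [Finset.insert_erase (Finset.mem_erase.2 ⟨hij.symm, hmj⟩), Finset.insert_erase hmi]
  · intro B hB
    simp only [Finset.mem_coe, Finset.mem_powersetCard] at hB
    have hjB : j ∉ B := fun h => (Finset.mem_erase.1 (hB.1 h)).1 rfl
    have hiB : i ∉ B := fun h => (Finset.mem_erase.1 (Finset.mem_erase.1 (hB.1 h)).2).1 rfl
    have hiJB : i ∉ insert j B := by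
      simp only [Finset.mem_insert]
      rintro (h | h)
      · exact hij h
      · exact hiB h
    show ((insert i (insert j B)).erase i).erase j = B
    rw [Finset.erase_insert hiJB, Finset.erase_insert hjB]

lemma count_one_mul {α : Type*} [DecidableEq α] (s : Finset α) (k : ℕ) (i : α) (hi : i ∈ s) :
    ((s.powersetCard k).filter fun A => i ∈ A).card * s.card = s.card.choose k * k := by
  rcases k with _ | k'
  · simp only [Nat.mul_zero]
    convert Nat.zero_mul s.card
    rw [Finset.card_eq_zero, Finset.filter_eq_empty_iff]
    intro A hA
    rw [Finset.powersetCard_zero, Finset.mem_singleton] at hA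
    simp [hA]
  · obtain ⟨a, ha⟩ : ∃ a, s.card = a + 1 :=
      ⟨s.card - 1, (Nat.succ_pred_eq_of_pos (Finset.card_pos.2 ⟨i, hi⟩)).symm⟩
    rw [card_pcard_mem s k' i hi, Finset.card_powersetCard, Finset.card_erase_of_mem hi, ha]
    simp only [Nat.add_sub_cancel]
    have h1 := Nat.add_one_mul_choose_eq a k'
    zify at h1 ⊢
    linear_combination h1

lemma count_two_mul {α : Type*} [DecidableEq α] (s : Finset α) (k : ℕ) (i j : α)
    (hi : i ∈ s) (hj : j ∈ s) (hij : i ≠ j) :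
    ((s.powersetCard k).filter fun A => i ∈ A ∧ j ∈ A).card * (s.card * (s.card - 1))
      = s.card.choose k * (k * (k - 1)) := by
  rcases k with _ | k
  · have he : ((s.powersetCard 0).filter fun A => i ∈ A ∧ j ∈ A) = ∅ := by
      rw [Finset.filter_eq_empty_iff]
      intro A hA
      rw [Finset.powersetCard_zero, Finset.mem_singleton] at hA
      simp [hA]
    rw [he]
    simp
  rcases k with _ | k'
  · have he : ((s.powersetCard 1).filter fun A => i ∈ A ∧ j ∈ A) = ∅ := by
      rw [Finset.filter_eq_empty_iff]
      intro A hA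
      rw [Finset.mem_powersetCard] at hA
      rintro ⟨hmi, hmj⟩
      have : ({i, j} : Finset α) ⊆ A := by
        intro x hx
        rcases Finset.mem_insert.1 hx with h | h
        · exact h ▸ hmi
        · exact (Finset.mem_singleton.1 h) ▸ hmj
      have := Finset.card_le_card this
      rw [Finset.card_pair hij, hA.2] at this
      omega
    rw [he]
    simp
  · obtain ⟨a, ha⟩ : ∃ a, s.card = a + 2 := by
      have h2 : 2 ≤ s.card := by
        have : ({i, j} : Finset α) ⊆ s := by
          intro x hx
          rcases Finset.mem_insert.1 hx with h | h
          · exact h ▸ hi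
          · exact (Finset.mem_singleton.1 h) ▸ hj
        calc 2 = ({i, j} : Finset α).card := (Finset.card_pair hij).symm
          _ ≤ s.card := Finset.card_le_card this
      exact ⟨s.card - 2, by omega⟩
    rw [card_pcard_mem_pair s k' i j hi hj hij, Finset.card_powersetCard,
      Finset.card_erase_of_mem (Finset.mem_erase.2 ⟨hij.symm, hj⟩),
      Finset.card_erase_of_mem hi, ha]
    simp only [Nat.add_sub_cancel, Nat.succ_sub_succ, Nat.sub_zero]
    have h1 := Nat.add_one_mul_choose_eq a k'
    have h2 := Nat.add_one_mul_choose_eq (a+1) (k'+1)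
    zify at h1 h2 ⊢
    linear_combination ((k':ℤ)+1) * h2 + ((a:ℤ)+2) * h1

lemma crd_card (n : ℕ) : ((crdSet n).card : ℝ) = (n.choose (n/2) : ℝ) := by
  have h := sum_crd n (fun _ => (1:ℝ))
  simp only [Finset.sum_const, nsmul_eq_mul, mul_one] at h
  rw [h, Finset.card_powersetCard, Finset.card_univ, Fintype.card_fin]

lemma crd_sum_ind (n : ℕ) (i : Fin n) :
    (∑ z ∈ crdSet n, ind (z i)) * n = (n.choose (n/2) : ℝ) * ((n/2 : ℕ) : ℝ) := by
  rw [sum_crd]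
  have hpt : ∀ A : Finset (Fin n), ind (decide (i ∈ A)) = if i ∈ A then (1:ℝ) else 0 := by
    intro A; by_cases h : i ∈ A <;> simp [ind, h]
  simp_rw [hpt]
  rw [Finset.sum_boole]
  have h := count_one_mul (Finset.univ : Finset (Fin n)) (n/2) i (Finset.mem_univ i)
  rw [Finset.card_univ, Fintype.card_fin] at h
  exact_mod_cast h

lemma crd_sum_ind2 (n : ℕ) (i j : Fin n) (hij : i ≠ j) :
    (∑ z ∈ crdSet n, ind (z i) * ind (z j)) * ((n * (n-1) : ℕ) : ℝ)
      = (n.choose (n/2) : ℝ) * ((n/2 * (n/2 - 1) : ℕ) : ℝ) := by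
  rw [sum_crd]
  have hpt : ∀ A : Finset (Fin n), ind (decide (i ∈ A)) * ind (decide (j ∈ A))
      = if i ∈ A ∧ j ∈ A then (1:ℝ) else 0 := by
    intro A
    by_cases h1 : i ∈ A <;> by_cases h2 : j ∈ A <;> simp [ind, h1, h2]
  simp_rw [hpt]
  rw [Finset.sum_boole]
  have h := count_two_mul (Finset.univ : Finset (Fin n)) (n/2) i j
    (Finset.mem_univ i) (Finset.mem_univ j) hij
  rw [Finset.card_univ, Fintype.card_fin] at h
  exact_mod_cast h

/-- For `n ≥ 2` even, potential outcomes `Yᵢ`, interference levels `ρᵢ ∈ [0,1]`,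
and the difference-in-means estimator `τ̂` under a completely randomized design on `n` units,
`Var[τ̂] = (1/n)·S[c]` where `cᵢ = Yᵢ(1,ρᵢ) + Yᵢ(0,ρᵢ)` and
`S[c] = (n-1)⁻¹·Σᵢ (cᵢ - c̄)²`, `c̄ = n⁻¹·Σᵢ cᵢ`. -/
theorem stmt_8 (n : ℕ) (hn : 2 ≤ n) (hev : Even n)
    (Y : Fin n → Bool → ℝ → ℝ) (ρ : Fin n → ℝ) (hρ : ∀ i, ρ i ∈ Set.Icc (0 : ℝ) 1)
    (τhat : (Fin n → Bool) → ℝ)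
    (hτ : ∀ z, τhat z = (2 / n) * (∑ i, Y i (z i) (ρ i) * ind (z i))
                      - (2 / n) * (∑ i, Y i (z i) (ρ i) * (1 - ind (z i))))
    (c : Fin n → ℝ) (hc : ∀ i, c i = Y i true (ρ i) + Y i false (ρ i)) :
    crdExp n (fun z => (τhat z - crdExp n τhat) ^ 2)
      = (1 / n) * ((∑ i, (c i - (∑ k, c k) / n) ^ 2) / ((n : ℝ) - 1)) := by
  obtain ⟨r, hr⟩ := hev
  have hhalf : n / 2 = r := by omega
  have hr1 : 1 ≤ r := by omega
  have hn0 : (n:ℝ) ≠ 0 := by positivity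
  have hn1 : (n:ℝ) - 1 ≠ 0 := by
    have : (2:ℝ) ≤ (n:ℝ) := by exact_mod_cast hn
    linarith
  have hrR : (n:ℝ) = 2 * (r:ℝ) := by
    have : (n:ℕ) = 2 * r := by omega
    exact_mod_cast this
  have hr1R : (1:ℝ) ≤ (r:ℝ) := by exact_mod_cast hr1
  set N : ℝ := (n.choose (n/2) : ℝ) with hNdef
  have hN0 : N ≠ 0 := by
    have : 0 < n.choose (n/2) := Nat.choose_pos (Nat.div_le_self n 2)
    positivity
  have hcard : ((crdSet n).card : ℝ) = N := crd_card n
  have hNr : N = (n.choose r : ℝ) := by rw [hNdef, hhalf]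
  have hrne : (r:ℝ) ≠ 0 := by positivity
  -- first moment
  have hEx : ∀ i, ∑ z ∈ crdSet n, ind (z i) = N / 2 := by
    intro i
    have h := crd_sum_ind n i
    rw [hhalf, ← hNr, hrR] at h
    have h2 : ((∑ z ∈ crdSet n, ind (z i)) * 2) * (r:ℝ) = N * (r:ℝ) := by
      linear_combination h
    have h3 := mul_right_cancel₀ hrne h2
    linarith
  -- second moment
  have hExx : ∀ i j, i ≠ j →
      ∑ z ∈ crdSet n, ind (z i) * ind (z j) = N * ((r:ℝ) * ((r:ℝ)-1)) / ((n:ℝ)*((n:ℝ)-1)) := by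
    intro i j hij
    have h := crd_sum_ind2 n i j hij
    rw [hhalf] at h
    have hc1 : ((n * (n-1) : ℕ) : ℝ) = (n:ℝ) * ((n:ℝ)-1) := by
      have h1 : (1:ℕ) ≤ n := by omega
      push_cast [Nat.cast_sub h1]
      ring
    have hc2 : ((r * (r-1) : ℕ) : ℝ) = (r:ℝ) * ((r:ℝ)-1) := by
      push_cast [Nat.cast_sub hr1]
      ring
    rw [hc1, hc2, ← hNr] at h
    have hnn : (n:ℝ) * ((n:ℝ)-1) ≠ 0 := mul_ne_zero hn0 hn1
    rw [eq_div_iff hnn]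
    linear_combination h
  -- rewrite τhat in terms of c
  set B := ∑ i, Y i false (ρ i) with hBdef
  set Sc := ∑ k, c k with hScdef
  have hτc : ∀ z, τhat z = (2/(n:ℝ)) * (∑ i, c i * ind (z i)) - (2/(n:ℝ)) * B := by
    intro z
    rw [hτ z]
    have hterm : ∀ i : Fin n, Y i (z i) (ρ i) * ind (z i) - Y i (z i) (ρ i) * (1 - ind (z i))
        = c i * ind (z i) - Y i false (ρ i) := by
      intro i
      cases hzi : z i <;> simp [ind, hzi, hc i] <;> ring
    calc (2/(n:ℝ)) * (∑ i, Y i (z i) (ρ i) * ind (z i))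
          - (2/(n:ℝ)) * (∑ i, Y i (z i) (ρ i) * (1 - ind (z i)))
        = (2/(n:ℝ)) * ∑ i, (Y i (z i) (ρ i) * ind (z i)
            - Y i (z i) (ρ i) * (1 - ind (z i))) := by
          rw [← mul_sub, Finset.sum_sub_distrib]
      _ = (2/(n:ℝ)) * ∑ i, (c i * ind (z i) - Y i false (ρ i)) := by
          rw [Finset.sum_congr rfl fun i _ => hterm i]
      _ = (2/(n:ℝ)) * (∑ i, c i * ind (z i) - B) := by
          rw [Finset.sum_sub_distrib, hBdef]
      _ = (2/(n:ℝ)) * (∑ i, c i * ind (z i)) - (2/(n:ℝ)) * B := by ring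
  set μ := crdExp n τhat with hμdef
  have hμ : μ = (2/(n:ℝ)) * (Sc/2) - (2/(n:ℝ)) * B := by
    rw [hμdef, crdExp]
    have hswap : ∑ z ∈ crdSet n, ∑ i, c i * ind (z i) = Sc * (N/2) := by
      rw [Finset.sum_comm]
      calc ∑ i, ∑ z ∈ crdSet n, c i * ind (z i)
          = ∑ i, c i * (N/2) := by
            refine Finset.sum_congr rfl fun i _ => ?_
            rw [← Finset.mul_sum, hEx i]
        _ = Sc * (N/2) := by rw [← Finset.sum_mul, hScdef]
    have hsum : ∑ z ∈ crdSet n, τhat z = ((2/(n:ℝ))*(Sc/2) - (2/(n:ℝ))*B) * N := by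
      calc ∑ z ∈ crdSet n, τhat z
          = ∑ z ∈ crdSet n, ((2/(n:ℝ)) * (∑ i, c i * ind (z i)) - (2/(n:ℝ)) * B) :=
            Finset.sum_congr rfl fun z _ => hτc z
        _ = (2/(n:ℝ)) * (∑ z ∈ crdSet n, ∑ i, c i * ind (z i))
              - ((crdSet n).card : ℝ) * ((2/(n:ℝ)) * B) := by
            rw [Finset.sum_sub_distrib, ← Finset.mul_sum, Finset.sum_const, nsmul_eq_mul]
        _ = (2/(n:ℝ)) * (Sc * (N/2)) - N * ((2/(n:ℝ)) * B) := by rw [hswap, hcard]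
        _ = ((2/(n:ℝ))*(Sc/2) - (2/(n:ℝ))*B) * N := by ring
    rw [hsum, hcard]
    field_simp
  have hdev : ∀ z, τhat z - μ = (2/(n:ℝ)) * ∑ i, c i * (ind (z i) - 1/2) := by
    intro z
    have hexp : ∑ i, c i * (ind (z i) - 1/2) = (∑ i, c i * ind (z i)) - Sc * (1/2) := by
      have hterm : ∀ i : Fin n, c i * (ind (z i) - 1/2) = c i * ind (z i) - c i * (1/2) :=
        fun i => by ring
      rw [Finset.sum_congr rfl fun i _ => hterm i, Finset.sum_sub_distrib, ← Finset.sum_mul,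
        hScdef]
    rw [hτc z, hμ, hexp]
    ring
  -- covariance values
  have hQd : ∀ i : Fin n, ∑ z ∈ crdSet n, (ind (z i) - 1/2) * (ind (z i) - 1/2) = N/4 := by
    intro i
    have hterm : ∀ z ∈ crdSet n, (ind (z i) - 1/2) * (ind (z i) - 1/2) = (1/4 : ℝ) := by
      intro z _
      cases hzi : z i <;> simp [ind, hzi] <;> norm_num
    rw [Finset.sum_congr rfl hterm, Finset.sum_const, nsmul_eq_mul, hcard]
    ring
  have hQo : ∀ i j : Fin n, i ≠ j →
      ∑ z ∈ crdSet n, (ind (z i) - 1/2) * (ind (z j) - 1/2) = -N/(4*((n:ℝ)-1)) := by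
    intro i j hij
    have hterm : ∀ z : Fin n → Bool, (ind (z i) - 1/2) * (ind (z j) - 1/2)
        = ind (z i) * ind (z j) - (1/2) * ind (z i) - (1/2) * ind (z j) + 1/4 :=
      fun z => by ring
    rw [Finset.sum_congr rfl fun z _ => hterm z, Finset.sum_add_distrib,
      Finset.sum_sub_distrib, Finset.sum_sub_distrib, ← Finset.mul_sum, ← Finset.mul_sum,
      hEx i, hEx j, hExx i j hij, Finset.sum_const, nsmul_eq_mul, hcard]
    rw [hrR]
    have h2r1 : 2*(r:ℝ) - 1 ≠ 0 := by linarith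
    have h2r1' : (r:ℝ)*2 - 1 ≠ 0 := by linarith
    field_simp
    ring
  -- expand the square of the deviation
  have hsq : ∀ z, (τhat z - μ)^2
      = (4/(n:ℝ)^2) * ∑ i, ∑ j, c i * c j * ((ind (z i) - 1/2) * (ind (z j) - 1/2)) := by
    intro z
    rw [hdev z, mul_pow, sq (∑ i, c i * (ind (z i) - 1/2)), Finset.sum_mul_sum]
    have h1 : (2/(n:ℝ))^2 = 4/(n:ℝ)^2 := by rw [div_pow]; norm_num
    rw [h1]
    congr 1
    refine Finset.sum_congr rfl fun i _ => Finset.sum_congr rfl fun j _ => ?_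
    ring
  set Q2 := ∑ i, c i * c i with hQ2def
  have hT : ∑ z ∈ crdSet n, (τhat z - μ)^2
      = (4/(n:ℝ)^2) * ((N/4) * Q2 + (-N/(4*((n:ℝ)-1))) * (Sc*Sc - Q2)) := by
    rw [Finset.sum_congr rfl fun z _ => hsq z, ← Finset.mul_sum]
    congr 1
    rw [Finset.sum_comm]
    have hswap2 : ∀ i : Fin n, ∑ z ∈ crdSet n, ∑ j, c i * c j * ((ind (z i) - 1/2) * (ind (z j) - 1/2))
        = ∑ j, c i * c j * (∑ z ∈ crdSet n, (ind (z i) - 1/2) * (ind (z j) - 1/2)) := by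
      intro i
      rw [Finset.sum_comm]
      exact Finset.sum_congr rfl fun j _ => by rw [← Finset.mul_sum]
    rw [Finset.sum_congr rfl fun i _ => hswap2 i]
    have hinner : ∀ i : Fin n, ∑ j, c i * c j * (∑ z ∈ crdSet n, (ind (z i) - 1/2) * (ind (z j) - 1/2))
        = c i * c i * (N/4) + (-N/(4*((n:ℝ)-1))) * (c i * (Sc - c i)) := by
      intro i
      rw [← Finset.add_sum_erase _ _ (Finset.mem_univ i)]
      congr 1
      · rw [hQd i]
      · calc ∑ j ∈ Finset.univ.erase i,
              c i * c j * (∑ z ∈ crdSet n, (ind (z i) - 1/2) * (ind (z j) - 1/2))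
            = ∑ j ∈ Finset.univ.erase i, (-N/(4*((n:ℝ)-1))) * (c i * c j) := by
              refine Finset.sum_congr rfl fun j hj => ?_
              rw [hQo i j (Finset.mem_erase.1 hj).1.symm]
              ring
          _ = (-N/(4*((n:ℝ)-1))) * (c i * ∑ j ∈ Finset.univ.erase i, c j) := by
              rw [← Finset.mul_sum, Finset.mul_sum, Finset.mul_sum, ← Finset.mul_sum]
          _ = (-N/(4*((n:ℝ)-1))) * (c i * (Sc - c i)) := by
              rw [Finset.sum_erase_eq_sub (Finset.mem_univ i), hScdef]
    rw [Finset.sum_congr rfl fun i _ => hinner i, Finset.sum_add_distrib]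
    congr 1
    · rw [← Finset.sum_mul, hQ2def, mul_comm]
    · rw [← Finset.mul_sum]
      congr 1
      have hterm : ∀ i : Fin n, c i * (Sc - c i) = c i * Sc - c i * c i := fun i => by ring
      rw [Finset.sum_congr rfl fun i _ => hterm i, Finset.sum_sub_distrib, ← Finset.sum_mul,
        hScdef, hQ2def]
  -- expand the right-hand side sum
  have hexpand : ∑ i, (c i - Sc/(n:ℝ))^2 = Q2 - Sc*Sc/(n:ℝ) := by
    have hterm : ∀ i : Fin n, (c i - Sc/(n:ℝ))^2
        = c i * c i - (2*Sc/(n:ℝ)) * c i + (Sc/(n:ℝ))*(Sc/(n:ℝ)) := fun i => by ring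
    rw [Finset.sum_congr rfl fun i _ => hterm i, Finset.sum_add_distrib,
      Finset.sum_sub_distrib, ← Finset.mul_sum, Finset.sum_const, Finset.card_univ,
      Fintype.card_fin, nsmul_eq_mul, hQ2def, ← hScdef]
    field_simp
    ring
  -- finish
  show crdExp n (fun z => (τhat z - μ)^2) = (1/(n:ℝ)) * ((∑ i, (c i - Sc/(n:ℝ))^2) / ((n:ℝ)-1))
  rw [crdExp, hT, hcard, hexpand]
  field_simp
  ring
end

section
/- Let n ≥ 3, let Z = (Z_1,…,Z_n) and ρ = (ρ_1,…,ρ_n) be fixed real vectors with population variances V[Z] > 0, V[ρ] > 0 and population covariance C[Z,ρ] satisfying C[Z,ρ]² < V[Z]·V[ρ]. Let ε_1,…,ε_n be square-integrable real random variables with 𝔼[ε_i] = 0, Var[ε_i] = σ², and Cov[ε_i, ε_j] = 0 for i ≠ j, and let Y = α·1 + β·Z + γ·ρ + ε for fixed real numbers α, β, γ. Let (α̂, β̂, γ̂)ᵀ = (XᵀX)^{−1}XᵀY, where X is the n×3 matrix with columns (1,…,1)ᵀ, Z, ρ. Then Var[β̂ + γ̂] = (σ²/n) · (V[Z] + V[ρ]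 − 2·C[Z,ρ]) / (V[Z]·V[ρ] − C[Z,ρ]²); equivalently, Var[β̂ + γ̂] = (σ²/n) · V[Z − ρ] / (V[Z]·V[ρ] − C[Z,ρ]²). -/
open MeasureTheory Matrix

private lemma sum_center' {n : ℕ} (hn : (n:ℝ) ≠ 0) (f g : Fin n → ℝ) :
    ∑ i, (f i - (∑ k, f k)/n) * (g i - (∑ k, g k)/n)
      = ∑ i, f i * g i - (∑ k, f k) * (∑ k, g k) / n := by
  have h : ∀ i : Fin n, (f i - (∑ k, f k)/n) * (g i - (∑ k, g k)/n)
      = f i * g i - (∑ k, f k)/n * g i - (∑ k, g k)/n * f i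
        + (∑ k, f k)/n * ((∑ k, g k)/n) := fun i => by ring
  simp only [h]
  rw [Finset.sum_add_distrib, Finset.sum_sub_distrib, Finset.sum_sub_distrib,
    ← Finset.mul_sum, ← Finset.mul_sum, Finset.sum_const, Finset.card_univ,
    Fintype.card_fin, nsmul_eq_mul]
  field_simp
  ring

set_option maxHeartbeats 1000000 in
/-- For `n ≥ 3`, fixed covariate vectors `Z, ρ` with positive population
variances `V[Z], V[ρ]` and population covariance `C[Z,ρ]` with `C[Z,ρ]² < V[Z]·V[ρ]`,
square-integrable uncorrelated errors `εᵢ` with `E[εᵢ] = 0`, `Var[εᵢ] = σ²`, and responses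
`Y = α·1 + β·Z + γ·ρ + ε`, the OLS estimator `(α̂,β̂,γ̂)ᵀ = (XᵀX)⁻¹XᵀY` satisfies
`Var[β̂ + γ̂] = (σ²/n)·(V[Z] + V[ρ] - 2C[Z,ρ])/(V[Z]·V[ρ] - C[Z,ρ]²)`; equivalently, the
numerator equals `V[Z - ρ]`. -/
theorem stmt_14 {Ω : Type*} [MeasurableSpace Ω] (μ : Measure Ω) [IsProbabilityMeasure μ]
    (n : ℕ) (hn : 3 ≤ n) (Z ρ : Fin n → ℝ)
    (VZ Vρ C : ℝ)
    (hVZdef : VZ = (∑ i, (Z i - (∑ k, Z k) / n) ^ 2) / n)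
    (hVρdef : Vρ = (∑ i, (ρ i - (∑ k, ρ k) / n) ^ 2) / n)
    (hCdef : C = (∑ i, (Z i - (∑ k, Z k) / n) * (ρ i - (∑ k, ρ k) / n)) / n)
    (hVZ : 0 < VZ) (hVρ : 0 < Vρ) (hC : C ^ 2 < VZ * Vρ)
    (ε : Fin n → Ω → ℝ) (hsq : ∀ i, MemLp (ε i) 2 μ)
    (hmean : ∀ i, ∫ ω, ε i ω ∂μ = 0)
    (σ : ℝ) (hvar : ∀ i, ∫ ω, (ε i ω - ∫ ω', ε i ω' ∂μ) ^ 2 ∂μ = σ ^ 2)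
    (hcov : ∀ i j, i ≠ j →
      ∫ ω, (ε i ω - ∫ ω', ε i ω' ∂μ) * (ε j ω - ∫ ω', ε j ω' ∂μ) ∂μ = 0)
    (α β γ : ℝ) (Y : Ω → Fin n → ℝ)
    (hY : ∀ ω i, Y ω i = α + β * Z i + γ * ρ i + ε i ω)
    (X : Matrix (Fin n) (Fin 3) ℝ) (hX : X = Matrix.of fun i => ![1, Z i, ρ i])
    (est : Ω → Fin 3 → ℝ) (hest : ∀ ω, est ω = (Xᵀ * X)⁻¹ *ᵥ (Xᵀ *ᵥ Y ω)) :
    (∫ ω, (est ω 1 + est ω 2 - ∫ ω', (est ω' 1 + est ω' 2) ∂μ) ^ 2 ∂μ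
        = (σ ^ 2 / n) * (VZ + Vρ - 2 * C) / (VZ * Vρ - C ^ 2)) ∧
    (∫ ω, (est ω 1 + est ω 2 - ∫ ω', (est ω' 1 + est ω' 2) ∂μ) ^ 2 ∂μ
        = (σ ^ 2 / n)
            * ((∑ i, (Z i - ρ i - (∑ k, (Z k - ρ k)) / n) ^ 2) / n)
            / (VZ * Vρ - C ^ 2)) := by
  have hn0 : (0:ℝ) < n := by
    have : 0 < n := by omega
    exact_mod_cast this
  have hnne : (n:ℝ) ≠ 0 := ne_of_gt hn0
  set mZ := (∑ k, Z k)/(n:ℝ) with hmZ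
  set mρ := (∑ k, ρ k)/(n:ℝ) with hmρ
  have hD : 0 < VZ * Vρ - C ^ 2 := by linarith
  have hDne : VZ * Vρ - C ^ 2 ≠ 0 := ne_of_gt hD
  have hdne : (n:ℝ) * (VZ * Vρ - C ^ 2) ≠ 0 := mul_ne_zero hnne hDne
  -- sum identities
  have hsZ : ∑ k, Z k = n * mZ := by rw [hmZ]; field_simp
  have hsρ : ∑ k, ρ k = n * mρ := by rw [hmρ]; field_simp
  have hSZZ : ∑ i, (Z i - mZ) * (Z i - mZ) = n * VZ := by
    have := hVZdef
    rw [this]; field_simp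
  have hSρρ : ∑ i, (ρ i - mρ) * (ρ i - mρ) = n * Vρ := by
    rw [hVρdef]; field_simp
  have hSZρ : ∑ i, (Z i - mZ) * (ρ i - mρ) = n * C := by
    rw [hCdef]; field_simp
  have hQZ : ∑ k, Z k * Z k = n * VZ + n * mZ * mZ := by
    have h := sum_center' hnne Z Z
    rw [← hmZ, hSZZ, hsZ] at h
    field_simp at h
    refine mul_right_cancel₀ hnne ?_
    simp only [pow_two] at h; linear_combination (-(n:ℝ)) * h
  have hQρ : ∑ k, ρ k * ρ k = n * Vρ + n * mρ * mρ := by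
    have h := sum_center' hnne ρ ρ
    rw [← hmρ, hSρρ, hsρ] at h
    field_simp at h
    refine mul_right_cancel₀ hnne ?_
    simp only [pow_two] at h; linear_combination (-(n:ℝ)) * h
  have hQC : ∑ k, Z k * ρ k = n * C + n * mZ * mρ := by
    have h := sum_center' hnne Z ρ
    rw [← hmZ, ← hmρ, hSZρ, hsZ, hsρ] at h
    field_simp at h
    refine mul_right_cancel₀ hnne ?_
    linear_combination (-(n:ℝ)) * h
  -- the matrices
  set d : ℝ := (n:ℝ) * (VZ * Vρ - C ^ 2) with hd
  have hQC' : ∑ k, ρ k * Z k = n * C + n * mZ * mρ := by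
    rw [← hQC]; exact Finset.sum_congr rfl fun i _ => mul_comm _ _
  set A : Matrix (Fin 3) (Fin 3) ℝ :=
    !![(n:ℝ), n*mZ, n*mρ;
       n*mZ, n*VZ + n*mZ*mZ, n*C + n*mZ*mρ;
       n*mρ, n*C + n*mZ*mρ, n*Vρ + n*mρ*mρ] with hA
  set B : Matrix (Fin 3) (Fin 3) ℝ :=
    !![((VZ+mZ^2)*(Vρ+mρ^2) - (C+mZ*mρ)^2)/d, -(mZ*Vρ - mρ*C)/d, -(mρ*VZ - mZ*C)/d;
       -(mZ*Vρ - mρ*C)/d, Vρ/d, -C/d;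
       -(mρ*VZ - mZ*C)/d, -C/d, VZ/d] with hB
  have hXtX : Xᵀ * X = A := by
    ext i j
    fin_cases i <;> fin_cases j <;>
      simp [hX, hA, Matrix.mul_apply, Finset.sum_add_distrib, hsZ, hsρ, hQZ, hQρ, hQC,
        hQC', Finset.card_univ]
  have hAB : A * B = 1 := by
    have hD2 : -C ^ 2 + Vρ * VZ ≠ 0 := by intro h0; apply hDne; linarith
    have hD3 : Vρ * VZ - C ^ 2 ≠ 0 := by intro h0; apply hDne; linarith
    ext i j
    fin_cases i <;> fin_cases j <;>
      · simp [hA, hB, Matrix.mul_apply, Fin.sum_univ_three, hd]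
        field_simp
        ring
  have hinv : (Xᵀ * X)⁻¹ = B := by rw [hXtX]; exact Matrix.inv_eq_right_inv hAB
  -- the coefficient vector
  set u : ℝ := (Vρ - C)/d with hu
  set v : ℝ := (VZ - C)/d with hv
  set c : Fin n → ℝ := fun i => u * (Z i - mZ) + v * (ρ i - mρ) with hc
  have hkey : ∀ w : Fin n → ℝ,
      (B *ᵥ (Xᵀ *ᵥ w)) 1 + (B *ᵥ (Xᵀ *ᵥ w)) 2 = ∑ i, c i * w i := by
    intro w
    simp only [Matrix.mulVec, dotProduct, Matrix.transpose_apply]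
    rw [Fin.sum_univ_three, Fin.sum_univ_three]
    simp only [hX, hB, Matrix.of_apply, Matrix.cons_val', Matrix.cons_val_zero,
      Matrix.cons_val_one, Matrix.head_cons, Matrix.empty_val', Matrix.cons_val_fin_one,
      Matrix.head_fin_const, Matrix.cons_val_two, Matrix.tail_cons]
    simp only [Finset.mul_sum, ← Finset.sum_add_distrib]
    apply Finset.sum_congr rfl
    intro i _
    simp only [hc, hu, hv]
    ring
  have hform : ∀ ω, est ω 1 + est ω 2
      = (∑ i, c i * (α + β * Z i + γ * ρ i)) + ∑ i, c i * ε i ω := by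
    intro ω
    rw [hest, hinv, hkey]
    rw [← Finset.sum_add_distrib]
    apply Finset.sum_congr rfl
    intro i _
    rw [hY]
    ring
  set K : ℝ := ∑ i, c i * (α + β * Z i + γ * ρ i) with hK
  have hintε : ∀ i, Integrable (ε i) μ := fun i => (hsq i).integrable (by norm_num)
  have hf_int : Integrable (fun ω => ∑ i, c i * ε i ω) μ :=
    integrable_finset_sum _ (fun i _ => (hintε i).const_mul _)
  have hmean2 : ∫ ω', (est ω' 1 + est ω' 2) ∂μ = K := by
    simp only [hform]
    rw [integral_add (integrable_const K) hf_int,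
      integral_finset_sum _ (fun i _ => (hintε i).const_mul _)]
    simp [integral_const_mul, hmean]
  have hprod : ∀ i j, Integrable (fun ω => ε i ω * ε j ω) μ := by
    intro i j
    have h := (hsq i).integrable_mul (hsq j)
    simpa [Pi.mul_def] using h
  have hip : ∀ i j, ∫ ω, ε i ω * ε j ω ∂μ = if i = j then σ ^ 2 else 0 := by
    intro i j
    by_cases hij : i = j
    · subst hij
      have h := hvar i
      simp only [hmean, sub_zero] at h
      simpa [pow_two, if_pos] using h
    · have h := hcov i j hij
      simp only [hmean, sub_zero] at h
      simp [hij, h]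
  have hvar_eq : ∫ ω, (∑ i, c i * ε i ω) ^ 2 ∂μ = σ ^ 2 * ∑ i, c i ^ 2 := by
    have hexp : ∀ ω : Ω, (∑ i, c i * ε i ω) ^ 2
        = ∑ i, ∑ j, (c i * c j) * (ε i ω * ε j ω) := by
      intro ω
      rw [pow_two, Finset.sum_mul_sum]
      exact Finset.sum_congr rfl fun i _ => Finset.sum_congr rfl fun j _ => by ring
    simp only [hexp]
    rw [integral_finset_sum _ (fun i _ =>
      integrable_finset_sum _ (fun j _ => (hprod i j).const_mul _))]
    have : ∀ i : Fin n, ∫ ω, ∑ j, (c i * c j) * (ε i ω * ε j ω) ∂μ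
        = ∑ j, (c i * c j) * (if i = j then σ ^ 2 else 0) := by
      intro i
      rw [integral_finset_sum _ (fun j _ => (hprod i j).const_mul _)]
      exact Finset.sum_congr rfl fun j _ => by rw [integral_const_mul, hip]
    simp only [this, mul_ite, mul_zero, Finset.sum_ite_eq, Finset.mem_univ, if_pos]
    rw [Finset.mul_sum]
    exact Finset.sum_congr rfl fun i _ => by ring
  have hc2 : ∑ i, c i ^ 2 = u^2 * (n*VZ) + 2*u*v*(n*C) + v^2 * (n*Vρ) := by
    have h : ∀ i : Fin n, c i ^ 2
        = u^2 * ((Z i - mZ)*(Z i - mZ)) + 2*u*v*((Z i - mZ)*(ρ i - mρ))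
          + v^2 * ((ρ i - mρ)*(ρ i - mρ)) := fun i => by rw [hc]; ring
    simp only [h]
    rw [Finset.sum_add_distrib, Finset.sum_add_distrib, ← Finset.mul_sum, ← Finset.mul_sum,
      ← Finset.mul_sum, hSZZ, hSZρ, hSρρ]
  have hvareq2 : ∫ ω, (est ω 1 + est ω 2 - ∫ ω', (est ω' 1 + est ω' 2) ∂μ) ^ 2 ∂μ
      = σ ^ 2 * ∑ i, c i ^ 2 := by
    rw [← hvar_eq]
    apply integral_congr_ae
    filter_upwards with ω
    rw [hform, hmean2, add_sub_cancel_left]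
  clear_value mZ mρ d A B u v c K
  have hD3 : Vρ * VZ - C ^ 2 ≠ 0 := by intro h0; apply hDne; linarith
  constructor
  · rw [hvareq2, hc2, hu, hv, hd]
    field_simp
    ring
  · rw [hvareq2, hc2, hu, hv, hd]
    have hsum : ∑ i, (Z i - ρ i - (∑ k, (Z k - ρ k)) / n) ^ 2
        = n * VZ + n * Vρ - 2 * (n * C) := by
      have hm : (∑ k, (Z k - ρ k)) / (n:ℝ) = mZ - mρ := by
        rw [Finset.sum_sub_distrib, hsZ, hsρ]; field_simp
      rw [hm]
      have h : ∀ i : Fin n, (Z i - ρ i - (mZ - mρ)) ^ 2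
          = (Z i - mZ)*(Z i - mZ) - 2*((Z i - mZ)*(ρ i - mρ)) + (ρ i - mρ)*(ρ i - mρ) :=
        fun i => by ring
      simp only [h]
      rw [Finset.sum_add_distrib, Finset.sum_sub_distrib, hSZZ, hSρρ, ← Finset.mul_sum, hSZρ]
      ring
    rw [hsum]
    field_simp
    ring
end

section
/- Let n ≥ 3, let Z = (Z_1,…,Z_n) and ρ = (ρ_1,…,ρ_n) be fixed real vectors with population variances V[Z] > 0, V[ρ] > 0 and population covariance C[Z,ρ] satisfying C[Z,ρ]² < V[Z]·V[ρ]. Let ε_1,…,ε_n be square-integrable real random variables with 𝔼[ε_i] = 0, Var[ε_i] = σ², and Cov[ε_i, ε_j] = 0 for i ≠ j, and let Y = α·1 + β·Z + γ·ρ + ε for fixed real numbers α, β, γ. Let (α̂, β̂, γ̂)ᵀ = (XᵀX)^{−1}XᵀY, where X is the n×3 matrix with columns (1,…,1)ᵀ, Z, ρ. Then Var[β̂ + γ̂] ≥ σ² / (n·V[ρ]). -/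
open MeasureTheory Matrix

private lemma l2_mul_int {Ω : Type*} [MeasurableSpace Ω] {μ : Measure Ω}
    {f g : Ω → ℝ} (hf : MemLp f 2 μ) (hg : MemLp g 2 μ) :
    Integrable (fun ω => f ω * g ω) μ := by
  rw [← memLp_one_iff_integrable]
  have h := hg.smul (r := 1) hf
  exact h

set_option maxHeartbeats 1000000 in
/-- In the setting of STATEMENT 14 (fixed covariates `Z, ρ` with positive
population variances, `C[Z,ρ]² < V[Z]·V[ρ]`, square-integrable uncorrelated mean-zero errors
with variance `σ²`, responses `Y = α·1 + β·Z + γ·ρ + ε`, OLS estimator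
`(α̂,β̂,γ̂)ᵀ = (XᵀX)⁻¹XᵀY`), the variance satisfies `Var[β̂ + γ̂] ≥ σ²/(n·V[ρ])`. -/
theorem stmt_15 {Ω : Type*} [MeasurableSpace Ω] (μ : Measure Ω) [IsProbabilityMeasure μ]
    (n : ℕ) (hn : 3 ≤ n) (Z ρ : Fin n → ℝ)
    (VZ Vρ C : ℝ)
    (hVZdef : VZ = (∑ i, (Z i - (∑ k, Z k) / n) ^ 2) / n)
    (hVρdef : Vρ = (∑ i, (ρ i - (∑ k, ρ k) / n) ^ 2) / n)
    (hCdef : C = (∑ i, (Z i - (∑ k, Z k) / n) * (ρ i - (∑ k, ρ k) / n)) / n)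
    (hVZ : 0 < VZ) (hVρ : 0 < Vρ) (hC : C ^ 2 < VZ * Vρ)
    (ε : Fin n → Ω → ℝ) (hsq : ∀ i, MemLp (ε i) 2 μ)
    (hmean : ∀ i, ∫ ω, ε i ω ∂μ = 0)
    (σ : ℝ) (hvar : ∀ i, ∫ ω, (ε i ω - ∫ ω', ε i ω' ∂μ) ^ 2 ∂μ = σ ^ 2)
    (hcov : ∀ i j, i ≠ j →
      ∫ ω, (ε i ω - ∫ ω', ε i ω' ∂μ) * (ε j ω - ∫ ω', ε j ω' ∂μ) ∂μ = 0)
    (α β γ : ℝ) (Y : Ω → Fin n → ℝ)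
    (hY : ∀ ω i, Y ω i = α + β * Z i + γ * ρ i + ε i ω)
    (X : Matrix (Fin n) (Fin 3) ℝ) (hX : X = Matrix.of fun i => ![1, Z i, ρ i])
    (est : Ω → Fin 3 → ℝ) (hest : ∀ ω, est ω = (Xᵀ * X)⁻¹ *ᵥ (Xᵀ *ᵥ Y ω)) :
    ∫ ω, (est ω 1 + est ω 2 - ∫ ω', (est ω' 1 + est ω' 2) ∂μ) ^ 2 ∂μ
      ≥ σ ^ 2 / (n * Vρ) := by
  have hn0 : (0:ℝ) < n := by
    have : 0 < n := by omega
    exact_mod_cast this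
  have hnne : (n:ℝ) ≠ 0 := ne_of_gt hn0
  set m1 : ℝ := (∑ k, Z k) / n with hm1
  set m2 : ℝ := (∑ k, ρ k) / n with hm2
  set A : ℝ := ∑ i, (Z i - m1) ^ 2 with hA
  set B : ℝ := ∑ i, (ρ i - m2) ^ 2 with hB
  set D : ℝ := ∑ i, (Z i - m1) * (ρ i - m2) with hD
  have hAeq : A = n * VZ := by rw [hVZdef]; field_simp
  have hBeq : B = n * Vρ := by rw [hVρdef]; field_simp
  have hDeq : D = n * C := by rw [hCdef]; field_simp
  -- centered sum expansions
  have hsumZ : ∑ i, Z i = n * m1 := by rw [hm1]; field_simp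
  have hsumρ : ∑ i, ρ i = n * m2 := by rw [hm2]; field_simp
  have hqZ : ∑ i, Z i ^ 2 = A + n * m1 ^ 2 := by
    have : ∀ i : Fin n, Z i ^ 2 = (Z i - m1) ^ 2 + (2 * m1 * Z i - m1 ^ 2) := fun i => by ring
    rw [Finset.sum_congr rfl fun i _ => this i, Finset.sum_add_distrib,
      Finset.sum_sub_distrib, ← Finset.mul_sum, hsumZ, Finset.sum_const,
      Finset.card_univ, Fintype.card_fin, nsmul_eq_mul]
    ring
  have hqρ : ∑ i, ρ i ^ 2 = B + n * m2 ^ 2 := by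
    have : ∀ i : Fin n, ρ i ^ 2 = (ρ i - m2) ^ 2 + (2 * m2 * ρ i - m2 ^ 2) := fun i => by ring
    rw [Finset.sum_congr rfl fun i _ => this i, Finset.sum_add_distrib,
      Finset.sum_sub_distrib, ← Finset.mul_sum, hsumρ, Finset.sum_const,
      Finset.card_univ, Fintype.card_fin, nsmul_eq_mul]
    ring
  have hp : ∑ i, Z i * ρ i = D + n * m1 * m2 := by
    have : ∀ i : Fin n, Z i * ρ i
        = (Z i - m1) * (ρ i - m2) + (m2 * Z i + m1 * ρ i - m1 * m2) := fun i => by ring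
    rw [Finset.sum_congr rfl fun i _ => this i, Finset.sum_add_distrib,
      Finset.sum_sub_distrib, Finset.sum_add_distrib, ← Finset.mul_sum, ← Finset.mul_sum,
      hsumZ, hsumρ, Finset.sum_const, Finset.card_univ, Fintype.card_fin, nsmul_eq_mul]
    ring
  set M : Matrix (Fin 3) (Fin 3) ℝ := Xᵀ * X with hM
  -- entries of M
  have hXa : ∀ (i : Fin n), X i 0 = 1 ∧ X i 1 = Z i ∧ X i 2 = ρ i := by
    intro i; refine ⟨?_, ?_, ?_⟩ <;> simp [hX]
  have e00 : M 0 0 = (n : ℝ) := by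
    simp [hM, Matrix.mul_apply, hX, Finset.card_univ]
  have e01 : M 0 1 = n * m1 := by
    simp [hM, Matrix.mul_apply, hX]; rw [← hsumZ]
  have e02 : M 0 2 = n * m2 := by
    simp [hM, Matrix.mul_apply, hX]; rw [← hsumρ]
  have e10 : M 1 0 = n * m1 := by
    simp [hM, Matrix.mul_apply, hX]; rw [← hsumZ]
  have e20 : M 2 0 = n * m2 := by
    simp [hM, Matrix.mul_apply, hX]; rw [← hsumρ]
  have e11 : M 1 1 = A + n * m1 ^ 2 := by
    simp [hM, Matrix.mul_apply, hX]; rw [← hqZ]; exact Finset.sum_congr rfl fun i _ => (sq (Z i)).symm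
  have e22 : M 2 2 = B + n * m2 ^ 2 := by
    simp [hM, Matrix.mul_apply, hX]; rw [← hqρ]; exact Finset.sum_congr rfl fun i _ => (sq (ρ i)).symm
  have e12 : M 1 2 = D + n * m1 * m2 := by
    simp [hM, Matrix.mul_apply, hX]; rw [← hp]
  have e21 : M 2 1 = D + n * m1 * m2 := by
    simp [hM, Matrix.mul_apply, hX]; rw [← hp]
    exact Finset.sum_congr rfl fun i _ => mul_comm _ _
  have hdet : M.det = n * (A * B - D ^ 2) := by
    rw [Matrix.det_fin_three, e00, e01, e02, e10, e11, e12, e20, e21, e22]; ring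
  have hABD : 0 < A * B - D ^ 2 := by
    rw [hAeq, hBeq, hDeq]
    have : (n:ℝ) * VZ * (n * Vρ) - (n * C) ^ 2 = n ^ 2 * (VZ * Vρ - C ^ 2) := by ring
    rw [this]
    have := sub_pos.mpr hC
    positivity
  have hdetpos : 0 < M.det := by rw [hdet]; positivity
  have hdetunit : IsUnit M.det := (ne_of_gt hdetpos).isUnit
  have hinv : M⁻¹ * M = 1 := Matrix.nonsing_inv_mul M hdetunit
  -- decompose estimator
  set θ : Fin 3 → ℝ := ![α, β, γ] with hθ
  set εv : Ω → Fin n → ℝ := fun ω i => ε i ω with hεv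
  have hYvec : ∀ ω, Y ω = X *ᵥ θ + εv ω := by
    intro ω; funext i
    simp [hY, hX, Matrix.mulVec, dotProduct, Fin.sum_univ_three, hθ, hεv]
    ring
  set B2 : Matrix (Fin 3) (Fin n) ℝ := M⁻¹ * Xᵀ with hB2
  have west : ∀ ω, est ω = θ + B2 *ᵥ εv ω := by
    intro ω
    rw [hest, hYvec, Matrix.mulVec_add, Matrix.mulVec_mulVec, ← hM, Matrix.mulVec_add,
      Matrix.mulVec_mulVec, hinv, Matrix.one_mulVec, Matrix.mulVec_mulVec, ← hB2]
  set w : Fin n → ℝ := fun i => B2 1 i + B2 2 i with hw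
  have key : ∀ ω, est ω 1 + est ω 2 = β + γ + ∑ i, w i * ε i ω := by
    intro ω
    rw [west]
    simp only [Pi.add_apply, Matrix.mulVec, dotProduct, hθ, hεv]
    rw [show (∑ i, w i * ε i ω) = ∑ i, B2 1 i * ε i ω + ∑ i, B2 2 i * ε i ω by
      rw [← Finset.sum_add_distrib]; exact Finset.sum_congr rfl fun i _ => by
        show (B2 1 i + B2 2 i) * ε i ω = _; ring]
    simp only [Matrix.cons_val_one, Matrix.head_cons, Matrix.cons_val_two, Matrix.tail_cons, Matrix.cons_val_zero]
    ring
  -- integrability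
  have hεL1 : ∀ i, Integrable (ε i) μ := fun i => (hsq i).integrable one_le_two
  have hfint : Integrable (fun ω => ∑ i, w i * ε i ω) μ :=
    integrable_finset_sum _ fun i _ => (hεL1 i).const_mul (w i)
  have hfmean : ∫ ω, (∑ i, w i * ε i ω) ∂μ = 0 := by
    rw [integral_finset_sum _ fun i _ => (hεL1 i).const_mul (w i)]
    simp [integral_const_mul, hmean]
  have hmean2 : ∫ ω', (est ω' 1 + est ω' 2) ∂μ = β + γ := by
    have : (fun ω' => est ω' 1 + est ω' 2) = fun ω' => β + γ + ∑ i, w i * ε i ω' := by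
      funext ω'; exact key ω'
    rw [this, integral_add (integrable_const _) hfint, hfmean, integral_const]
    simp
  -- second moments
  have hvar' : ∀ i, ∫ ω, (ε i ω) ^ 2 ∂μ = σ ^ 2 := by
    intro i; have := hvar i; rw [hmean i] at this; simpa using this
  have hcov' : ∀ i j, i ≠ j → ∫ ω, ε i ω * ε j ω ∂μ = 0 := by
    intro i j hij; have := hcov i j hij; rw [hmean i, hmean j] at this; simpa using this
  have hprodint : ∀ i j : Fin n, Integrable (fun ω => w i * ε i ω * (w j * ε j ω)) μ := by
    intro i j
    have := (l2_mul_int (hsq i) (hsq j)).const_mul (w i * w j)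
    refine this.congr (Filter.Eventually.of_forall fun ω => ?_)
    ring
  have hsq2 : ∫ ω, (∑ i, w i * ε i ω) ^ 2 ∂μ = (∑ i, w i ^ 2) * σ ^ 2 := by
    have expand : ∀ ω, (∑ i, w i * ε i ω) ^ 2
        = ∑ i, ∑ j, w i * ε i ω * (w j * ε j ω) := by
      intro ω; rw [sq, Finset.sum_mul_sum]
    rw [show (fun ω => (∑ i, w i * ε i ω) ^ 2)
        = fun ω => ∑ i, ∑ j, w i * ε i ω * (w j * ε j ω) from funext expand]
    rw [integral_finset_sum _ fun i _ => integrable_finset_sum _ fun j _ => hprodint i j]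
    rw [Finset.sum_mul]
    refine Finset.sum_congr rfl fun i _ => ?_
    rw [integral_finset_sum _ fun j _ => hprodint i j]
    rw [Finset.sum_eq_single i]
    · have : (fun ω => w i * ε i ω * (w i * ε i ω)) = fun ω => (w i * w i) * (ε i ω * ε i ω) := by
        funext ω; ring
      rw [this, integral_const_mul]
      have : ∫ ω, ε i ω * ε i ω ∂μ = σ ^ 2 := by
        rw [show (fun ω => ε i ω * ε i ω) = fun ω => (ε i ω) ^ 2 from funext fun ω => (sq _).symm]
        exact hvar' i
      rw [this]; ring
    · intro j _ hji
      have : (fun ω => w i * ε i ω * (w j * ε j ω)) = fun ω => (w i * w j) * (ε i ω * ε j ω) := by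
        funext ω; ring
      rw [this, integral_const_mul, hcov' i j (Ne.symm hji), mul_zero]
    · intro h; exact absurd (Finset.mem_univ i) h
  -- reduce goal
  have hLHS : ∫ ω, (est ω 1 + est ω 2 - ∫ ω', (est ω' 1 + est ω' 2) ∂μ) ^ 2 ∂μ
      = (∑ i, w i ^ 2) * σ ^ 2 := by
    rw [hmean2]
    have heq : (fun ω => (est ω 1 + est ω 2 - (β + γ)) ^ 2)
        = fun ω => (∑ i, w i * ε i ω) ^ 2 := by
      funext ω; rw [key ω]; ring
    calc ∫ ω, (est ω 1 + est ω 2 - (β + γ)) ^ 2 ∂μ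
        = ∫ ω, (∑ i, w i * ε i ω) ^ 2 ∂μ := by rw [heq]
      _ = (∑ i, w i ^ 2) * σ ^ 2 := hsq2
  rw [hLHS]
  -- Cauchy–Schwarz lower bound on ∑ w², with v = centered ρ
  set v : Fin n → ℝ := fun i => ρ i - m2 with hv
  have hvX : v = X *ᵥ ![-m2, 0, 1] := by
    funext i
    simp [hv, hX, Matrix.mulVec, dotProduct, Fin.sum_univ_three]
    ring
  have hwu : w = ![0, 1, 1] ᵥ* B2 := by
    funext i
    simp [hw, Matrix.vecMul, dotProduct, Fin.sum_univ_three]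
  have hwv : ∑ i, w i * v i = 1 := by
    have h1 : ∑ i, w i * v i = w ⬝ᵥ (X *ᵥ ![-m2, 0, 1]) := by rw [← hvX]; rfl
    rw [h1, Matrix.dotProduct_mulVec, hwu, Matrix.vecMul_vecMul, hB2, Matrix.mul_assoc,
      ← hM, hinv, Matrix.vecMul_one]
    simp [dotProduct, Fin.sum_univ_three]
  have hsumv : ∑ i, v i ^ 2 = n * Vρ := by rw [← hBeq]
  have hcs : 1 ≤ (∑ i, w i ^ 2) * (n * Vρ) := by
    have := Finset.sum_mul_sq_le_sq_mul_sq Finset.univ w v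
    rw [hwv, hsumv] at this
    simpa using this
  have hnVρ : 0 < (n:ℝ) * Vρ := by positivity
  rw [ge_iff_le, div_le_iff₀ hnVρ]
  calc σ ^ 2 = σ ^ 2 * 1 := (mul_one _).symm
    _ ≤ σ ^ 2 * ((∑ i, w i ^ 2) * (n * Vρ)) :=
        mul_le_mul_of_nonneg_left hcs (sq_nonneg σ)
    _ = (∑ i, w i ^ 2) * σ ^ 2 * (↑n * Vρ) := by ring
end
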